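/- Let g : (0,∞) → ℝ be differentiable, v : (0,∞) → ℝ continuous, and H ∈ ℝ, such that for all T > 0 the derivative of T ↦ g(T)/T at T equals −(H + v(T))/T². Then for all 0 < T₁ ≤ T₂: g(T₁) = (T₁/T₂)·g(T₂) − H·(T₁/T₂ − 1) + w(T₁,T₂), where w(T₁,T₂) = T₁·∫_{T₁}^{T₂} v(S)/S² dS. Moreover, if |v(S)| ≤ M for all S ∈ [T₁,T₂], then |w(T₁,T₂)| ≤ M·(1 − T₁/T₂). -/

import Mathlib

/-- Gibbs–Helmholtz with a non-constant enthalpy: if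
`(d/dT)(g(T)/T) = −(H + v(T))/T²` on `(0,∞)` with `v` continuous, then for
`0 < T₁ ≤ T₂`, `g(T₁) = (T₁/T₂)·g(T₂) − H·(T₁/T₂ − 1) + w(T₁,T₂)` with
`w(T₁,T₂) = T₁·∫_{T₁}^{T₂} v(S)/S² dS`, and if `|v| ≤ M` on `[T₁,T₂]` then
`|w(T₁,T₂)| ≤ M·(1 − T₁/T₂)`. -/
theorem gibbs_energy_linear_with_error
    (g v : ℝ → ℝ) (H : ℝ)
    (hg : ∀ T > (0:ℝ), DifferentiableAt ℝ g T)
    (hv : ContinuousOn v (Set.Ioi 0))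
    (hGH : ∀ T > (0:ℝ), HasDerivAt (fun T => g T / T) (-(H + v T) / T ^ 2) T) :
    ∀ T₁ T₂ : ℝ, 0 < T₁ → T₁ ≤ T₂ →
      (g T₁ = (T₁ / T₂) * g T₂ - H * (T₁ / T₂ - 1)
        + T₁ * ∫ S in T₁..T₂, v S / S ^ 2) ∧
      (∀ M : ℝ, (∀ S ∈ Set.Icc T₁ T₂, |v S| ≤ M) →
        |T₁ * ∫ S in T₁..T₂, v S / S ^ 2| ≤ M * (1 - T₁ / T₂)) := by
  intro T₁ T₂ h1 h12
  have h2 : 0 < T₂ := lt_of_lt_of_le h1 h12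
  have huIcc : Set.uIcc T₁ T₂ = Set.Icc T₁ T₂ := Set.uIcc_of_le h12
  have hsub : Set.Icc T₁ T₂ ⊆ Set.Ioi 0 := fun x hx => lt_of_lt_of_le h1 hx.1
  have hpos : ∀ S ∈ Set.Icc T₁ T₂, (0:ℝ) < S := fun S hS => hsub hS
  -- continuity of S ↦ v S / S^2 on [T₁,T₂]
  have hcont : ContinuousOn (fun S => v S / S ^ 2) (Set.Icc T₁ T₂) :=
    (hv.mono hsub).div ((continuous_pow 2).continuousOn)
      (fun x hx => pow_ne_zero 2 (ne_of_gt (hpos x hx)))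
  have hInt : IntervalIntegrable (fun S => v S / S ^ 2) MeasureTheory.volume T₁ T₂ := by
    apply ContinuousOn.intervalIntegrable
    rwa [huIcc]
  -- FTC for f = g/S - H/S with derivative -(v S)/S²
  have hderiv : ∀ S ∈ Set.uIcc T₁ T₂,
      HasDerivAt (fun S => g S / S - H / S) (-(v S / S ^ 2)) S := by
    intro S hS
    rw [huIcc] at hS
    have hS0 : 0 < S := hpos S hS
    have hd1 := hGH S hS0
    have hd2 : HasDerivAt (fun S : ℝ => H / S) (H * (-(S ^ 2)⁻¹)) S := by
      simpa [div_eq_mul_inv] using (hasDerivAt_inv hS0.ne').const_mul H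
    have := hd1.sub hd2
    convert this using 1
    rfl
    rfl
    rfl
    ring
  have hInt' : IntervalIntegrable (fun S => -(v S / S ^ 2)) MeasureTheory.volume T₁ T₂ :=
    hInt.neg
  have hFTC := intervalIntegral.integral_eq_sub_of_hasDerivAt hderiv hInt'
  rw [intervalIntegral.integral_neg] at hFTC
  have hIntEq : ∫ S in T₁..T₂, v S / S ^ 2
      = (g T₁ / T₁ - H / T₁) - (g T₂ / T₂ - H / T₂) := by linarith
  constructor
  · rw [hIntEq]
    field_simp
    ring
  · intro M hM
    have hInt2 : IntervalIntegrable (fun S => M / S ^ 2) MeasureTheory.volume T₁ T₂ := by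
      apply ContinuousOn.intervalIntegrable
      rw [huIcc]
      exact continuousOn_const.div ((continuous_pow 2).continuousOn)
        (fun x hx => pow_ne_zero 2 (ne_of_gt (hpos x hx)))
    have habs : |∫ S in T₁..T₂, v S / S ^ 2| ≤ ∫ S in T₁..T₂, M / S ^ 2 := by
      calc |∫ S in T₁..T₂, v S / S ^ 2| ≤ ∫ S in T₁..T₂, |v S / S ^ 2| :=
            intervalIntegral.abs_integral_le_integral_abs h12
        _ ≤ ∫ S in T₁..T₂, M / S ^ 2 := by
            apply intervalIntegral.integral_mono_on h12 hInt.abs hInt2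
            intro S hS
            have hS0 : 0 < S := hpos S hS
            rw [abs_div, abs_of_pos (pow_pos hS0 2)]
            exact div_le_div_of_nonneg_right (hM S hS) (pow_pos hS0 2).le
    -- compute ∫ M/S² = M/T₁ - M/T₂
    have hderiv2 : ∀ S ∈ Set.uIcc T₁ T₂,
        HasDerivAt (fun S : ℝ => -(M / S)) (M / S ^ 2) S := by
      intro S hS
      rw [huIcc] at hS
      have hS0 : 0 < S := hpos S hS
      have : HasDerivAt (fun S : ℝ => M / S) (M * (-(S ^ 2)⁻¹)) S := by
        simpa [div_eq_mul_inv] using (hasDerivAt_inv hS0.ne').const_mul M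
      convert this.neg using 1
      rfl
      rfl
      rfl
      ring
    have hval := intervalIntegral.integral_eq_sub_of_hasDerivAt hderiv2 hInt2
    have hvalEq : ∫ S in T₁..T₂, M / S ^ 2 = M / T₁ - M / T₂ := by
      rw [hval]; ring
    rw [abs_mul, abs_of_pos h1]
    calc T₁ * |∫ S in T₁..T₂, v S / S ^ 2| ≤ T₁ * (M / T₁ - M / T₂) := by
          apply mul_le_mul_of_nonneg_left _ h1.le
          rw [← hvalEq]; exact habs
      _ = M * (1 - T₁ / T₂) := by field_simp
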